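/- Let A be an n×n symmetric matrix over the field GF(2) with zero diagonal (i.e., A is the adjacency matrix over GF(2) of a simple graph). If A is invertible, then n is even and the inverse matrix A⁻¹ is also symmetric with zero diagonal (hence A⁻¹ is again the adjacency matrix of a simple graph on the same vertex set). -/

import Mathlib

open Finset Matrix

/-- A fixed-point-free involution on `Fin n` forces `n` even. -/
lemma even_of_fpf_involution {n : ℕ} (σ : Equiv.Perm (Fin n))
    (h2 : ∀ i, σ (σ i) = i) (hfp : ∀ i, σ i ≠ i) : Even n := by
  have hsum : ∑ _i : Fin n, (1 : ZMod 2) = 0 :=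
    Finset.sum_ninvolution (fun i => σ i)
      (fun _ => by decide) (fun i _ => hfp i) (fun i => Finset.mem_univ _) h2
  have : ((n : ℕ) : ZMod 2) = 0 := by simpa using hsum
  rcases (ZMod.natCast_eq_zero_iff n 2).mp this with ⟨k, hk⟩
  exact ⟨k, by omega⟩

/-- The quadratic form of a symmetric zero-diagonal matrix over GF(2) vanishes. -/
lemma quad_zero {n : ℕ} (A : Matrix (Fin n) (Fin n) (ZMod 2))
    (hsymm : A.IsSymm) (hdiag : ∀ i, A i i = 0) (x : Fin n → ZMod 2) :
    x ⬝ᵥ (A.mulVec x) = 0 := by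
  have hs : ∀ j k, A j k = A k j := fun j k => by
    conv_lhs => rw [← hsymm]
    rfl
  have : x ⬝ᵥ (A.mulVec x) = ∑ p : Fin n × Fin n, x p.1 * A p.1 p.2 * x p.2 := by
    rw [Fintype.sum_prod_type]
    simp [dotProduct, Matrix.mulVec, Finset.mul_sum, mul_assoc]
  rw [this]
  refine Finset.sum_ninvolution (fun p => (p.2, p.1)) ?_ ?_
    (fun p => Finset.mem_univ _) (fun p => rfl)
  · intro p
    have h : x p.1 * A p.1 p.2 * x p.2 = x p.2 * A p.2 p.1 * x p.1 := by
      rw [hs p.1 p.2]; ring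
    rw [← h]
    exact CharTwo.add_self_eq_zero _
  · intro p hp
    rcases eq_or_ne p.1 p.2 with h | h
    · exact absurd (by rw [← h, hdiag, mul_zero, zero_mul]) hp
    · simp only [Ne, Prod.ext_iff, not_and]
      intro h1; exact absurd h1.symm h

/-- If a symmetric matrix over GF(2) with zero diagonal (an adjacency matrix of a simple
graph over GF(2)) is invertible, then its size is even and its inverse is again symmetric
with zero diagonal. -/
theorem inv_adjMatrix_gf2 {n : ℕ} (A : Matrix (Fin n) (Fin n) (ZMod 2))
    (hsymm : A.IsSymm) (hdiag : ∀ i, A i i = 0) (hinv : IsUnit A) :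
    Even n ∧ A⁻¹.IsSymm ∧ ∀ i, A⁻¹ i i = 0 := by
  have hs : ∀ j k, A j k = A k j := fun j k => by
    conv_lhs => rw [← hsymm]
    rfl
  have hdet : IsUnit A.det := (Matrix.isUnit_iff_isUnit_det A).mp hinv
  have hAAinv : A * A⁻¹ = 1 := Matrix.mul_nonsing_inv A hdet
  refine ⟨?_, ?_, ?_⟩
  · -- Even n via determinant expansion
    by_contra hodd
    rw [Nat.not_even_iff_odd] at hodd
    have hdet0 : A.det = 0 := by
      rw [Matrix.det_apply']
      refine Finset.sum_ninvolution (fun σ => σ⁻¹) ?_ ?_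
        (fun σ => Finset.mem_univ _) (fun σ => inv_inv σ)
      · intro σ
        have hε : Equiv.Perm.sign σ⁻¹ = Equiv.Perm.sign σ := by
          rw [Equiv.Perm.sign_inv]
        have hprod : ∏ i, A (σ⁻¹ i) i = ∏ i, A (σ i) i := by
          rw [← Equiv.prod_comp σ (fun i => A (σ⁻¹ i) i)]
          simp only [Equiv.Perm.inv_def, Equiv.symm_apply_apply]
          exact Finset.prod_congr rfl (fun i _ => hs i (σ i))
        rw [hε, hprod]
        exact CharTwo.add_self_eq_zero _
      · intro σ hσ heq
        -- σ = σ⁻¹ means σ is an involution; n odd gives a fixed point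
        have heq' : σ⁻¹ = σ := heq
        have h2 : ∀ i, σ (σ i) = i := fun i => by
          nth_rewrite 1 [← heq']
          exact σ.symm_apply_apply i
        rcases Classical.em (∃ i, σ i = i) with ⟨i, hi⟩ | hfp
        · apply hσ
          rw [Finset.prod_eq_zero (Finset.mem_univ i) (by rw [hi]; exact hdiag i),
            mul_zero]
        · push_neg at hfp
          exact (Nat.not_even_iff_odd.mpr hodd) (even_of_fpf_involution σ h2 hfp)
    exact hdet.ne_zero hdet0
  · -- A⁻¹ symmetric
    rw [Matrix.IsSymm, Matrix.transpose_nonsing_inv, hsymm]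
  · -- zero diagonal of inverse
    intro i
    set x : Fin n → ZMod 2 := A⁻¹.mulVec (Pi.single i 1) with hx
    have hAx : A.mulVec x = Pi.single i 1 := by
      rw [hx, Matrix.mulVec_mulVec, hAAinv, Matrix.one_mulVec]
    have h1 : x ⬝ᵥ (A.mulVec x) = x i := by
      rw [hAx, dotProduct_single, mul_one]
    have h2 : x i = A⁻¹ i i := by
      simp [hx, Matrix.mulVec_single]
    rw [← h2, ← h1, quad_zero A hsymm hdiag]
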